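/- Let G = (V,E) be a finite simple graph and let p : V → ℝ² be in general position. Let U ⊆ V be a nonempty subset. Then (span{v_{ij}(p) : {i,j} ∈ E}) ∩ W_U ⊆ span{v_{ij}(p) : i,j ∈ U, i ≠ j}, where W_U is the subspace of functions V → ℝ² vanishing at every vertex outside U, and the right-hand span is over all edges of the complete graph on U. -/

import Mathlib

noncomputable section

open Classical in
/-- The edge vector of the pair `(i, j)` under the realization `p`: the function `V → ℝ × ℝ`
whose value is `p i - p j` at `i`, `p j - p i` at `j`, and `0` elsewhere. -/
def edgeVec {V : Type*} (p : V → ℝ × ℝ) (i j : V) : V → ℝ × ℝ :=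
  fun v => if v = i then p i - p j else if v = j then p j - p i else 0

/-- The set of edge vectors of a set `F` of (potential) edges under the realization `p`. -/
def edgeVecs {V : Type*} (p : V → ℝ × ℝ) (F : Set (Sym2 V)) : Set (V → ℝ × ℝ) :=
  {x | ∃ i j, s(i, j) ∈ F ∧ x = edgeVec p i j}

/-- The rank of the edge vectors of `F` under the realization `p`. -/
def rankOf {V : Type*} (p : V → ℝ × ℝ) (F : Set (Sym2 V)) : ℕ :=
  Module.finrank ℝ (Submodule.span ℝ (edgeVecs p F))

/-- The generic rank of a set of edges: the maximum over all realizations `p` of the rank. -/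
def genRankSet {V : Type*} (F : Set (Sym2 V)) : ℕ :=
  ⨆ p : V → ℝ × ℝ, rankOf p F

/-- The generic rank `r(G)` of a graph. -/
def genRank {V : Type*} (G : SimpleGraph V) : ℕ := genRankSet G.edgeSet

/-- The stress number `s_p(F)` of a set of edges under the realization `p`
(the dimension of the space of resolvable stresses). -/
def stressNum {V : Type*} (p : V → ℝ × ℝ) (F : Set (Sym2 V)) : ℕ :=
  F.ncard - rankOf p F

/-- The generic stress number `s(F)` of a set of edges. -/
def genStressSet {V : Type*} (F : Set (Sym2 V)) : ℕ := F.ncard - genRankSet F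

/-- The generic stress number `s(G)` of a graph. -/
def genStress {V : Type*} (G : SimpleGraph V) : ℕ := G.edgeSet.ncard - genRank G

/-- A planar configuration is in general position if it is injective and no three distinct
vertices have collinear images. -/
def GeneralPosition {V : Type*} (p : V → ℝ × ℝ) : Prop :=
  Function.Injective p ∧
    ∀ i j k : V, i ≠ j → j ≠ k → i ≠ k →
      ¬ Collinear ℝ ({p i, p j, p k} : Set (ℝ × ℝ))

/-- `W_U`: the subspace of functions `V → ℝ × ℝ` vanishing at every vertex outside `U`. -/
def vanishOn {V : Type*} (U : Set V) : Submodule ℝ (V → ℝ × ℝ) where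
  carrier := {f | ∀ v ∉ U, f v = 0}
  zero_mem' := fun v _ => rfl
  add_mem' := by
    intro a b ha hb v hv
    simp [Pi.add_apply, ha v hv, hb v hv]
  smul_mem' := by
    intro c f hf v hv
    simp [Pi.smul_apply, hf v hv]

end

section AuxSection
open Classical

namespace Aux

variable {V : Type*}

def det2 (u w : ℝ × ℝ) : ℝ := u.1 * w.2 - u.2 * w.1

lemma det2_neg_neg (u w : ℝ × ℝ) : det2 (-u) (-w) = det2 u w := by
  simp [det2]

lemma detpar {u z : ℝ × ℝ} (hu : u ≠ 0) (h : det2 u z = 0) : ∃ l : ℝ, z = l • u := by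
  have h' : u.1 * z.2 - u.2 * z.1 = 0 := h
  rcases eq_or_ne u.1 0 with h1 | h1
  · have h2 : u.2 ≠ 0 := fun h2 => hu (Prod.ext h1 h2)
    refine ⟨z.2 / u.2, Prod.ext ?_ ?_⟩
    · have : u.2 * z.1 = 0 := by rw [h1] at h'; linarith
      have hz1 : z.1 = 0 := by
        rcases mul_eq_zero.mp this with hh | hh
        · exact absurd hh h2
        · exact hh
      simp [hz1, h1, Prod.smul_def]
    · simp [Prod.smul_def]
      field_simp
  · refine ⟨z.1 / u.1, Prod.ext ?_ ?_⟩
    · simp [Prod.smul_def]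
      field_simp
    · simp [Prod.smul_def]
      field_simp
      linarith [h']

lemma cramer2 {u w : ℝ × ℝ} (hD : det2 u w ≠ 0) (z : ℝ × ℝ) :
    ∃ a b : ℝ, z = a • u + b • w := by
  have hD' : u.1 * w.2 - u.2 * w.1 ≠ 0 := hD
  refine ⟨det2 z w / det2 u w, det2 u z / det2 u w, Prod.ext ?_ ?_⟩
  · show z.1 = det2 z w / det2 u w * u.1 + det2 u z / det2 u w * w.1
    rw [div_mul_eq_mul_div, div_mul_eq_mul_div, ← add_div, eq_div_iff hD]
    simp only [det2]; ring
  · show z.2 = det2 z w / det2 u w * u.2 + det2 u z / det2 u w * w.2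
    rw [div_mul_eq_mul_div, div_mul_eq_mul_div, ← add_div, eq_div_iff hD]
    simp only [det2]; ring

lemma indep_zero {u w : ℝ × ℝ} (hD : det2 u w ≠ 0) {a b : ℝ} (h : a • u + b • w = 0) :
    a = 0 ∧ b = 0 := by
  have h1 : a * det2 u w = 0 := by
    have : det2 (a • u + b • w) w = a * det2 u w := by simp [det2, Prod.smul_def]; ring
    rw [h] at this
    simpa [det2] using this.symm
  have h2 : b * det2 u w = 0 := by
    have : det2 u (a • u + b • w) = b * det2 u w := by simp [det2, Prod.smul_def]; ring
    rw [h] at this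
    simpa [det2] using this.symm
  exact ⟨(mul_eq_zero.mp h1).resolve_right hD, (mul_eq_zero.mp h2).resolve_right hD⟩

lemma gp_det {p : V → ℝ × ℝ} (hp : GeneralPosition p) {i j k : V}
    (hij : i ≠ j) (hjk : j ≠ k) (hik : i ≠ k) :
    det2 (p j - p i) (p k - p i) ≠ 0 := by
  intro h0
  apply hp.2 i j k hij hjk hik
  have hmem : p i ∈ ({p i, p j, p k} : Set (ℝ × ℝ)) := by simp
  rw [collinear_iff_of_mem hmem]
  rcases eq_or_ne (p j - p i) 0 with hu | hu
  · refine ⟨p k - p i, fun q hq => ?_⟩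
    rcases hq with rfl | rfl | rfl
    · exact ⟨0, by simp⟩
    · exact ⟨0, by simp [vadd_eq_add, sub_eq_zero.mp hu]⟩
    · exact ⟨1, by simp [vadd_eq_add]⟩
  · obtain ⟨l, hl⟩ := detpar hu h0
    refine ⟨p j - p i, fun q hq => ?_⟩
    rcases hq with rfl | rfl | rfl
    · exact ⟨0, by simp⟩
    · exact ⟨1, by simp [vadd_eq_add]⟩
    · exact ⟨l, by rw [vadd_eq_add, ← hl]; abel⟩


lemma edgeVec_self (p : V → ℝ × ℝ) (i : V) : edgeVec p i i = 0 := by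
  funext v; simp [edgeVec]

lemma edgeVec_apply_fst (p : V → ℝ × ℝ) (i j : V) : edgeVec p i j i = p i - p j := by
  simp [edgeVec]

lemma edgeVec_apply_snd (p : V → ℝ × ℝ) {i j : V} (h : j ≠ i) : edgeVec p i j j = p j - p i := by
  simp [edgeVec, h]

lemma edgeVec_apply_other (p : V → ℝ × ℝ) {i j v : V} (hi : v ≠ i) (hj : v ≠ j) :
    edgeVec p i j v = 0 := by
  simp [edgeVec, hi, hj]

lemma edgeVec_comm (p : V → ℝ × ℝ) {i j : V} (h : i ≠ j) : edgeVec p i j = edgeVec p j i := by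
  funext v
  by_cases hvi : v = i
  · subst hvi; simp [edgeVec, h]
  · by_cases hvj : v = j
    · subst hvj; simp [edgeVec, h.symm, hvi]
    · simp [edgeVec, hvi, hvj]

/-- The pairs-within-`S` edge vectors. -/
def pairVecs (p : V → ℝ × ℝ) (S : Set V) : Set (V → ℝ × ℝ) :=
  {x | ∃ i ∈ S, ∃ j ∈ S, i ≠ j ∧ x = edgeVec p i j}

variable [Fintype V]

def eμ (f : V → ℝ × ℝ) : ℝ × ℝ := ∑ z, f z

def eν (p : V → ℝ × ℝ) (f : V → ℝ × ℝ) : ℝ := ∑ z, det2 (p z) (f z)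

lemma eμ_add (f g : V → ℝ × ℝ) : eμ (f + g) = eμ f + eμ g := by
  simp [eμ, Finset.sum_add_distrib]

lemma eμ_smul (c : ℝ) (f : V → ℝ × ℝ) : eμ (c • f) = c • eμ f := by
  simp [eμ, Finset.smul_sum]

lemma eν_add (p f g) : eν (V := V) p (f + g) = eν p f + eν p g := by
  simp only [eν, ← Finset.sum_add_distrib]
  congr 1; funext z; simp [det2]; ring

lemma eν_smul (p : V → ℝ × ℝ) (c : ℝ) (f : V → ℝ × ℝ) : eν p (c • f) = c * eν p f := by
  simp only [eν, Finset.mul_sum]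
  congr 1; funext z; simp [det2]; ring

lemma eμ_edge (p : V → ℝ × ℝ) (i j : V) : eμ (edgeVec p i j) = 0 := by
  rcases eq_or_ne i j with rfl | hij
  · simp [edgeVec_self, eμ]
  · have : eμ (edgeVec p i j) = ∑ z ∈ ({i, j} : Finset V), edgeVec p i j z := by
      refine (Finset.sum_subset (Finset.subset_univ _) fun z _ hz => ?_).symm
      simp at hz
      exact edgeVec_apply_other p hz.1 hz.2
    rw [eμ] at this ⊢
    rw [this, Finset.sum_pair hij, edgeVec_apply_fst, edgeVec_apply_snd p hij.symm]
    abel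

lemma eν_edge (p : V → ℝ × ℝ) (i j : V) : eν p (edgeVec p i j) = 0 := by
  rcases eq_or_ne i j with rfl | hij
  · simp [edgeVec_self, eν, det2]
  · have : eν p (edgeVec p i j) = ∑ z ∈ ({i, j} : Finset V), det2 (p z) (edgeVec p i j z) := by
      refine (Finset.sum_subset (Finset.subset_univ _) fun z _ hz => ?_).symm
      simp at hz
      rw [edgeVec_apply_other p hz.1 hz.2]
      simp [det2]
    rw [this, Finset.sum_pair hij, edgeVec_apply_fst, edgeVec_apply_snd p hij.symm]
    simp [det2]; ring

lemma k4 {p : V → ℝ × ℝ} (hp : GeneralPosition p) {v a b c : V}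
    (hva : v ≠ a) (hvb : v ≠ b) (hvc : v ≠ c) (hab : a ≠ b) (hac : a ≠ c) (hbc : b ≠ c)
    {sa sb sc : ℝ}
    (hrel : sa • (p v - p a) + sb • (p v - p b) + sc • (p v - p c) = 0) :
    sa • edgeVec p v a + sb • edgeVec p v b + sc • edgeVec p v c ∈
      Submodule.span ℝ ({edgeVec p a b, edgeVec p a c, edgeVec p b c} : Set (V → ℝ × ℝ)) := by
  have hD : det2 (p b - p a) (p c - p a) ≠ 0 := gp_det hp hab hbc hac
  obtain ⟨l1, l2, hl⟩ := cramer2 hD (sa • (p a - p v))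
  set y := sa • edgeVec p v a + sb • edgeVec p v b + sc • edgeVec p v c with hy
  set w := y + l1 • edgeVec p b a + l2 • edgeVec p c a with hwdef
  have hwv : w v = 0 := by
    simp only [hwdef, hy, Pi.add_apply, Pi.smul_apply]
    rw [edgeVec_apply_fst, edgeVec_apply_fst, edgeVec_apply_fst,
      edgeVec_apply_other p hvb hva, edgeVec_apply_other p hvc hva]
    simp only [smul_zero, add_zero]
    exact hrel
  have hwa : w a = 0 := by
    simp only [hwdef, hy, Pi.add_apply, Pi.smul_apply]
    rw [edgeVec_apply_snd p hva.symm, edgeVec_apply_other p hva.symm hab,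
      edgeVec_apply_other p hva.symm hac, edgeVec_apply_snd p hab, edgeVec_apply_snd p hac,
      hl]
    simp only [smul_zero, add_zero]
    module
  have hwoff : ∀ z, z ≠ v → z ≠ a → z ≠ b → z ≠ c → w z = 0 := by
    intro z hzv hza hzb hzc
    simp only [hwdef, hy, Pi.add_apply, Pi.smul_apply]
    rw [edgeVec_apply_other p hzv hza, edgeVec_apply_other p hzv hzb,
      edgeVec_apply_other p hzv hzc, edgeVec_apply_other p hzb hza,
      edgeVec_apply_other p hzc hza]
    simp
  have hwnotbc : ∀ z, z ≠ b → z ≠ c → w z = 0 := by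
    intro z hzb hzc
    by_cases hzv : z = v
    · subst hzv; exact hwv
    · by_cases hza : z = a
      · subst hza; exact hwa
      · exact hwoff z hzv hza hzb hzc
  have hμw : eμ w = 0 := by
    rw [hwdef, hy]
    simp only [eμ_add, eμ_smul, eμ_edge]
    simp
  have hνw : eν p w = 0 := by
    rw [hwdef, hy]
    simp only [eν_add, eν_smul, eν_edge]
    simp
  have hsum : w b + w c = 0 := by
    rw [← hμw, eμ]
    have hstep : ∑ z, w z = ∑ z ∈ ({b, c} : Finset V), w z := by
      refine (Finset.sum_subset (Finset.subset_univ _) fun z _ hz => ?_).symm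
      simp at hz
      exact hwnotbc z hz.1 hz.2
    rw [hstep, Finset.sum_pair hbc]
  have hwc : w c = -(w b) := by
    have := hsum
    linear_combination (norm := module) this
  have hdet : det2 (p b - p c) (w b) = 0 := by
    have hsub : eν p w = det2 (p b) (w b) + det2 (p c) (w c) := by
      rw [eν]
      have hstep : ∑ z, det2 (p z) (w z) = ∑ z ∈ ({b, c} : Finset V), det2 (p z) (w z) := by
        refine (Finset.sum_subset (Finset.subset_univ _) fun z _ hz => ?_).symm
        simp at hz
        rw [hwnotbc z hz.1 hz.2]; simp [det2]
      rw [hstep, Finset.sum_pair hbc]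
    rw [hνw, hwc] at hsub
    have : det2 (p b - p c) (w b) = det2 (p b) (w b) + det2 (p c) (-(w b)) := by
      simp [det2]; ring
    rw [this, ← hsub]
  have hpbc : p b - p c ≠ 0 := sub_ne_zero.mpr (fun e => hbc (hp.1 e))
  obtain ⟨l3, hl3⟩ := detpar hpbc hdet
  have hweq : w = l3 • edgeVec p b c := by
    funext z
    rw [Pi.smul_apply]
    by_cases hzb : z = b
    · subst hzb; rw [edgeVec_apply_fst, ← hl3]
    · by_cases hzc : z = c
      · subst hzc
        rw [edgeVec_apply_snd p hbc.symm, hwc, hl3, ← smul_neg, neg_sub]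
      · rw [hwnotbc z hzb hzc, edgeVec_apply_other p hzb hzc, smul_zero]
  have hyeq : y = l3 • edgeVec p b c - l1 • edgeVec p b a - l2 • edgeVec p c a := by
    rw [← hweq, hwdef]; abel
  have m1 : edgeVec p b a ∈ ({edgeVec p a b, edgeVec p a c, edgeVec p b c} : Set (V → ℝ × ℝ)) := by
    rw [← edgeVec_comm p hab]; simp
  have m2 : edgeVec p c a ∈ ({edgeVec p a b, edgeVec p a c, edgeVec p b c} : Set (V → ℝ × ℝ)) := by
    rw [← edgeVec_comm p hac]; simp
  have m3 : edgeVec p b c ∈ ({edgeVec p a b, edgeVec p a c, edgeVec p b c} : Set (V → ℝ × ℝ)) := by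
    simp
  rw [hyeq]
  exact sub_mem (sub_mem (Submodule.smul_mem _ _ (Submodule.subset_span m3))
    (Submodule.smul_mem _ _ (Submodule.subset_span m1)))
    (Submodule.smul_mem _ _ (Submodule.subset_span m2))


end Aux

namespace Aux2
open Aux

variable {V : Type*} [Fintype V]

lemma star_mem_aux {p : V → ℝ × ℝ} (hp : GeneralPosition p) (S' : Set V) (v : V)
    (hv : v ∉ S') :
    ∀ n (ω : V → ℝ), (Finset.univ.filter fun j => ω j ≠ 0).card ≤ n →
      (∀ j, ω j ≠ 0 → j ∈ S') →
      (∑ j : V, ω j • (p v - p j)) = 0 →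
      ∑ j : V, ω j • edgeVec p v j ∈ Submodule.span ℝ (pairVecs p S') := by
  intro n
  induction n with
  | zero =>
    intro ω hcard hsupp hrel
    have hzero : ∀ j, ω j = 0 := by
      intro j
      by_contra hj
      have : j ∈ Finset.univ.filter fun j => ω j ≠ 0 := by simp [hj]
      have := Finset.card_pos.mpr ⟨j, this⟩
      omega
    have : ∑ j : V, ω j • edgeVec p v j = 0 :=
      Finset.sum_eq_zero fun j _ => by rw [hzero j, zero_smul]
    rw [this]; exact Submodule.zero_mem _
  | succ n ih =>
    intro ω hcard hsupp hrel
    set s := Finset.univ.filter fun j => ω j ≠ 0 with hs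
    rcases Finset.eq_empty_or_nonempty s with hse | ⟨a, ha⟩
    · have hzero : ∀ j, ω j = 0 := by
        intro j
        by_contra hj
        have : j ∈ s := by simp [hs, hj]
        simp [hse] at this
      have : ∑ j : V, ω j • edgeVec p v j = 0 :=
        Finset.sum_eq_zero fun j _ => by rw [hzero j, zero_smul]
      rw [this]; exact Submodule.zero_mem _
    · have hωa : ω a ≠ 0 := by simpa [hs] using ha
      have haS : a ∈ S' := hsupp a hωa
      have hva : v ≠ a := fun e => hv (e ▸ haS)
      rcases Finset.eq_empty_or_nonempty (s.erase a) with hs2 | ⟨b, hb⟩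
      · -- support ⊆ {a} : contradiction
        have honly : ∀ j, j ≠ a → ω j = 0 := by
          intro j hj
          by_contra hjj
          have : j ∈ s.erase a := Finset.mem_erase.mpr ⟨hj, by simp [hs, hjj]⟩
          simp [hs2] at this
        have : ∑ j : V, ω j • (p v - p j) = ω a • (p v - p a) :=
          Finset.sum_eq_single a (fun j _ hj => by rw [honly j hj, zero_smul]) (by simp)
        rw [this] at hrel
        have : p v - p a ≠ 0 := sub_ne_zero.mpr fun e => hva (hp.1 e)
        rcases smul_eq_zero.mp hrel with h | h
        · exact absurd h hωa
        · exact absurd h this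
      · have hba : b ≠ a := (Finset.mem_erase.mp hb).1
        have hωb : ω b ≠ 0 := by
          have := (Finset.mem_erase.mp hb).2
          simpa [hs] using this
        have hbS : b ∈ S' := hsupp b hωb
        have hvb : v ≠ b := fun e => hv (e ▸ hbS)
        have hDab : det2 (p v - p a) (p v - p b) ≠ 0 := by
          rw [← neg_sub (p a) (p v), ← neg_sub (p b) (p v), det2_neg_neg]
          exact gp_det hp hva hba.symm hvb
        rcases Finset.eq_empty_or_nonempty ((s.erase a).erase b) with hs3 | ⟨c, hc⟩
        · -- support ⊆ {a, b} : contradiction via independence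
          have honly : ∀ j, j ≠ a → j ≠ b → ω j = 0 := by
            intro j hj1 hj2
            by_contra hjj
            have : j ∈ (s.erase a).erase b :=
              Finset.mem_erase.mpr ⟨hj2, Finset.mem_erase.mpr ⟨hj1, by simp [hs, hjj]⟩⟩
            simp [hs3] at this
          have hred : ∑ j : V, ω j • (p v - p j)
              = ∑ j ∈ ({a, b} : Finset V), ω j • (p v - p j) := by
            refine (Finset.sum_subset (Finset.subset_univ _) fun j _ hj => ?_).symm
            simp at hj
            rw [honly j hj.1 hj.2, zero_smul]
          rw [hred, Finset.sum_pair hba.symm] at hrel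
          exact absurd (indep_zero hDab hrel).1 hωa
        · have hcb : c ≠ b := (Finset.mem_erase.mp hc).1
          have hca : c ≠ a := (Finset.mem_erase.mp (Finset.mem_erase.mp hc).2).1
          have hωc : ω c ≠ 0 := by
            have := (Finset.mem_erase.mp (Finset.mem_erase.mp hc).2).2
            simpa [hs] using this
          have hcS : c ∈ S' := hsupp c hωc
          have hvc : v ≠ c := fun e => hv (e ▸ hcS)
          obtain ⟨α, β, hαβ⟩ := cramer2 hDab (p v - p c)
          set σ : V → ℝ := fun j =>
            if j = a then -(ω c * α) else if j = b then -(ω c * β) else if j = c then ω c else 0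
            with hσ
          have hσa : σ a = -(ω c * α) := by simp [hσ]
          have hσb : σ b = -(ω c * β) := by simp [hσ, hba]
          have hσc : σ c = ω c := by simp [hσ, hca, hcb]
          have hσoff : ∀ j, j ≠ a → j ≠ b → j ≠ c → σ j = 0 := by
            intro j h1 h2 h3
            simp [hσ, h1, h2, h3]
          -- sum of σ-weighted terms reduces to three terms
          have hσsum1 : ∑ j : V, σ j • (p v - p j)
              = σ a • (p v - p a) + σ b • (p v - p b) + σ c • (p v - p c) := by
            have hred : ∑ j : V, σ j • (p v - p j)
                = ∑ j ∈ ({a, b, c} : Finset V), σ j • (p v - p j) := by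
              refine (Finset.sum_subset (Finset.subset_univ _) fun j _ hj => ?_).symm
              simp at hj
              rw [hσoff j hj.1 hj.2.1 hj.2.2, zero_smul]
            rw [hred]
            rw [Finset.sum_insert (by simp [hba.symm, hca.symm]),
              Finset.sum_insert (by simp [hcb.symm]), Finset.sum_singleton]
            abel
          have hσsum2 : ∑ j : V, σ j • edgeVec p v j
              = σ a • edgeVec p v a + σ b • edgeVec p v b + σ c • edgeVec p v c := by
            have hred : ∑ j : V, σ j • edgeVec p v j
                = ∑ j ∈ ({a, b, c} : Finset V), σ j • edgeVec p v j := by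
              refine (Finset.sum_subset (Finset.subset_univ _) fun j _ hj => ?_).symm
              simp at hj
              rw [hσoff j hj.1 hj.2.1 hj.2.2, zero_smul]
            rw [hred]
            rw [Finset.sum_insert (by simp [hba.symm, hca.symm]),
              Finset.sum_insert (by simp [hcb.symm]), Finset.sum_singleton]
            abel
          have hσrel : σ a • (p v - p a) + σ b • (p v - p b) + σ c • (p v - p c) = 0 := by
            rw [hσa, hσb, hσc]
            have : ω c • (p v - p c) = ω c • (α • (p v - p a) + β • (p v - p b)) := by
              rw [← hαβ]
            linear_combination (norm := module) this
          -- the reduced weight function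
          set ω' : V → ℝ := ω - σ with hω'
          have hω'c : ω' c = 0 := by simp [hω', hσc]
          have hω'supp : ∀ j, ω' j ≠ 0 → j ∈ S' := by
            intro j hj
            by_cases h1 : j = a
            · exact h1 ▸ haS
            · by_cases h2 : j = b
              · exact h2 ▸ hbS
              · by_cases h3 : j = c
                · exact h3 ▸ hcS
                · apply hsupp j
                  intro h0
                  apply hj
                  simp [hω', h0, hσoff j h1 h2 h3]
          have hω'mem : ∀ j, ω' j ≠ 0 → j ∈ s.erase c := by
            intro j hj
            refine Finset.mem_erase.mpr ⟨?_, ?_⟩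
            · intro h3; exact hj (h3 ▸ (by simp [hω', hσc]))
            · by_cases h1 : j = a
              · exact h1 ▸ ha
              · by_cases h2 : j = b
                · exact h2 ▸ (Finset.mem_erase.mp hb).2
                · by_cases h3 : j = c
                  · exact absurd (h3 ▸ (by simp [hω', hσc] : ω' c = 0)) hj
                  · simp only [hs, Finset.mem_filter, Finset.mem_univ, true_and]
                    intro h0
                    exact hj (by simp [hω', h0, hσoff j h1 h2 h3])
          have hcs : c ∈ s := by simp [hs, hωc]
          have hcard' : (Finset.univ.filter fun j => ω' j ≠ 0).card ≤ n := by
            have hsub : (Finset.univ.filter fun j => ω' j ≠ 0) ⊆ s.erase c := by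
              intro j hj
              exact hω'mem j (by simpa using hj)
            calc (Finset.univ.filter fun j => ω' j ≠ 0).card
                ≤ (s.erase c).card := Finset.card_le_card hsub
              _ = s.card - 1 := Finset.card_erase_of_mem hcs
              _ ≤ n := by omega
          have hω'rel : ∑ j : V, ω' j • (p v - p j) = 0 := by
            have : ∑ j : V, ω' j • (p v - p j)
                = ∑ j : V, ω j • (p v - p j) - ∑ j : V, σ j • (p v - p j) := by
              rw [← Finset.sum_sub_distrib]
              refine Finset.sum_congr rfl fun j _ => ?_
              simp [hω', sub_smul]
            rw [this, hrel, hσsum1, hσrel, sub_zero]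
          have hmem1 := ih ω' hcard' hω'supp hω'rel
          have hmem2 : ∑ j : V, σ j • edgeVec p v j ∈ Submodule.span ℝ (pairVecs p S') := by
            rw [hσsum2]
            have hk4 := k4 hp hva hvb hvc hba.symm hca.symm hcb.symm hσrel
            refine Submodule.span_mono ?_ hk4
            rintro f (rfl | rfl | rfl)
            · exact ⟨a, haS, b, hbS, hba.symm, rfl⟩
            · exact ⟨a, haS, c, hcS, hca.symm, rfl⟩
            · exact ⟨b, hbS, c, hcS, hcb.symm, rfl⟩
          have hsplit : ∑ j : V, ω j • edgeVec p v j
              = ∑ j : V, ω' j • edgeVec p v j + ∑ j : V, σ j • edgeVec p v j := by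
            rw [← Finset.sum_add_distrib]
            refine Finset.sum_congr rfl fun j _ => ?_
            simp [hω', sub_smul]
          rw [hsplit]
          exact Submodule.add_mem _ hmem1 hmem2
end Aux2

namespace Aux2
open Aux
variable {V : Type*} [Fintype V]

lemma deletion {p : V → ℝ × ℝ} (hp : GeneralPosition p) (S : Set V) (v : V)
    {x : V → ℝ × ℝ} (hx : x ∈ Submodule.span ℝ (pairVecs p S)) (hxv : x v = 0) :
    x ∈ Submodule.span ℝ (pairVecs p (S \ {v})) := by
  classical
  set S' := S \ {v} with hS'
  have hvS' : v ∉ S' := by simp [hS']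
  have hsplit : Submodule.span ℝ (pairVecs p S) ≤
      Submodule.span ℝ (pairVecs p S') ⊔
        Submodule.span ℝ ((fun j => edgeVec p v j) '' S') := by
    rw [← Submodule.span_union]
    apply Submodule.span_mono
    rintro f ⟨i, hi, j, hj, hij, rfl⟩
    by_cases hiv : i = v
    · subst hiv
      right
      exact ⟨j, by simp [hS', hj, hij.symm], rfl⟩
    · by_cases hjv : j = v
      · subst hjv
        right
        exact ⟨i, by simp [hS', hi, hiv], (edgeVec_comm p hij).symm⟩
      · left
        exact ⟨i, by simp [hS', hi, hiv], j, by simp [hS', hj, hjv], hij, rfl⟩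
  obtain ⟨z, hz, y, hy, hzy⟩ := Submodule.mem_sup.mp (hsplit hx)
  have hzv : z v = 0 := by
    have hle : Submodule.span ℝ (pairVecs p S') ≤
        LinearMap.ker (LinearMap.proj (R := ℝ) (φ := fun _ : V => ℝ × ℝ) v) := by
      rw [Submodule.span_le]
      rintro f ⟨i, hi, j, hj, hij, rfl⟩
      have hvi : v ≠ i := fun e => hvS' (e ▸ hi)
      have hvj : v ≠ j := fun e => hvS' (e ▸ hj)
      simp only [SetLike.mem_coe, LinearMap.mem_ker, LinearMap.proj_apply]
      exact edgeVec_apply_other p hvi hvj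
    exact hle hz
  have hyv : y v = 0 := by
    have h1 := congrFun hzy v
    rw [Pi.add_apply, hzv, hxv, zero_add] at h1
    exact h1
  rw [Finsupp.mem_span_image_iff_linearCombination] at hy
  obtain ⟨l, hls, hlv⟩ := hy
  have hlsupp : ∀ j, (l : V →₀ ℝ) j ≠ 0 → j ∈ S' := by
    intro j hj
    exact (Finsupp.mem_supported ℝ l).mp hls (Finsupp.mem_support_iff.mpr hj)
  have hexp : y = ∑ j : V, l j • edgeVec p v j := by
    rw [← hlv, Finsupp.linearCombination_apply, Finsupp.sum]
    exact Finset.sum_subset (Finset.subset_univ _)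
      (fun j _ hj => by rw [Finsupp.notMem_support_iff.mp hj, zero_smul])
  have hrel : ∑ j : V, (l : V →₀ ℝ) j • (p v - p j) = 0 := by
    have h1 := congrFun hexp v
    rw [hyv] at h1
    rw [Finset.sum_apply] at h1
    have h2 : ∀ j : V, (l j • edgeVec p v j) v = l j • (p v - p j) := by
      intro j
      rw [Pi.smul_apply]
      congr 1
      simp [edgeVec]
    rw [Finset.sum_congr rfl (fun j _ => h2 j)] at h1
    exact h1.symm
  have hymem : y ∈ Submodule.span ℝ (pairVecs p S') := by
    rw [hexp]
    exact star_mem_aux hp S' v hvS' _ l le_rfl hlsupp hrel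
  rw [← hzy]
  exact Submodule.add_mem _ hz hymem

end Aux2

end AuxSection

/-- If `p` is in general position and `U ⊆ V` is nonempty, then
`span{v_ij(p) : {i,j} ∈ E} ∩ W_U ⊆ span{v_ij(p) : i, j ∈ U, i ≠ j}`. -/
theorem span_inter_vanishOn_le {V : Type*} [Fintype V] (G : SimpleGraph V)
    (p : V → ℝ × ℝ) (hp : GeneralPosition p) (U : Set V) (hU : U.Nonempty) :
    Submodule.span ℝ (edgeVecs p G.edgeSet) ⊓ vanishOn U ≤
      Submodule.span ℝ {x | ∃ i ∈ U, ∃ j ∈ U, i ≠ j ∧ x = edgeVec p i j} := by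
  classical
  intro x hx
  rw [Submodule.mem_inf] at hx
  obtain ⟨hx1, hx2⟩ := hx
  have hx2' : ∀ v ∉ U, x v = 0 := hx2
  have h0 : x ∈ Submodule.span ℝ (Aux.pairVecs p Set.univ) := by
    refine Submodule.span_mono ?_ hx1
    rintro f ⟨i, j, hij, rfl⟩
    exact ⟨i, trivial, j, trivial, ((SimpleGraph.mem_edgeSet G).mp hij).ne, rfl⟩
  have key : ∀ T : Finset V, x ∈ Submodule.span ℝ (Aux.pairVecs p (U ∪ (↑T : Set V)ᶜ)) := by
    intro T
    induction T using Finset.induction_on with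
    | empty =>
      have hset : U ∪ (↑(∅ : Finset V) : Set V)ᶜ = Set.univ := by simp
      rw [hset]; exact h0
    | @insert a T hnot ih =>
      by_cases haU : a ∈ U
      · have hset : U ∪ (↑(insert a T) : Set V)ᶜ = U ∪ (↑T : Set V)ᶜ := by
          ext w
          by_cases hw : w = a <;> simp [hw, haU]
        rw [hset]; exact ih
      · have hxa : x a = 0 := hx2' a haU
        have hdel := Aux2.deletion hp (U ∪ (↑T : Set V)ᶜ) a ih hxa
        have hset : (U ∪ (↑T : Set V)ᶜ) \ {a} = U ∪ (↑(insert a T) : Set V)ᶜ := by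
          ext w
          by_cases hw : w = a <;> simp [hw, haU] <;> tauto
        rw [hset] at hdel
        exact hdel
  have hfin := key Finset.univ
  have hset : U ∪ (↑(Finset.univ : Finset V) : Set V)ᶜ = U := by simp
  rw [hset] at hfin
  exact hfin
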